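/- Let V be a uniquely 2-divisible Alt(5)-module satisfying the normalizer assumption. Then in End(V), the sum of all 60 group elements Σ_{g ∈ Alt(5)} g equals 0. -/

import Mathlib

/-- The alternating group `Alt(5)`. -/
abbrev A5 : Type := ↥(alternatingGroup (Fin 5))

/-- The trace map `tr_g = 1 + g + ⋯ + g^(|g|-1)`. -/
noncomputable def traceMap {G V : Type*} [Group G] [AddCommGroup V] [DistribMulAction G V]
    (g : G) (v : V) : V := ∑ i ∈ Finset.range (orderOf g), g ^ i • v

/-- The normalizer assumption: whenever `V` is `|g|`-divisible for nontrivial `g ∈ Alt(5)`,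
the elements of `N_{Alt(5)}(⟨g⟩) \ ⟨g⟩` invert `tr_g(V)`. -/
def NormalizerAssumption (V : Type*) [AddCommGroup V] [DistribMulAction A5 V] : Prop :=
  ∀ g : A5, g ≠ 1 → (∀ v : V, ∃ w : V, v = orderOf g • w) →
    ∀ α : A5, α ∈ Subgroup.normalizer (Subgroup.zpowers g : Set A5) → α ∉ Subgroup.zpowers g →
      ∀ v : V, α • traceMap g v = - traceMap g v

/-- `(0 1)(2 3)` lies in the alternating group. -/
lemma gmem : Equiv.swap (0:Fin 5) 1 * Equiv.swap 2 3 ∈ alternatingGroup (Fin 5) := by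
  rw [Equiv.Perm.mem_alternatingGroup]; decide

/-- `(0 2)(1 3)` lies in the alternating group. -/
lemma amem : Equiv.swap (0:Fin 5) 2 * Equiv.swap 1 3 ∈ alternatingGroup (Fin 5) := by
  rw [Equiv.Perm.mem_alternatingGroup]; decide

/-- for a uniquely 2-divisible `Alt(5)`-module `V` satisfying the normalizer
assumption, the sum of all 60 group elements acts as `0` on `V`. -/
theorem stmt16 {V : Type*} [AddCommGroup V] [DistribMulAction A5 V]
    (h2div : Function.Bijective (fun v : V => 2 • v))
    (hNA : NormalizerAssumption V) :
    ∀ v : V, ∑ g : A5, g • v = 0 := by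
  intro v
  set w : V := ∑ g : A5, g • v with hw
  -- w is a fixed point of the action
  have hfix : ∀ h : A5, h • w = w := by
    intro h
    rw [hw, Finset.smul_sum]
    calc ∑ g : A5, h • g • v = ∑ g : A5, (h * g) • v := by
          refine Finset.sum_congr rfl fun g _ => ?_
          rw [mul_smul]
      _ = ∑ g : A5, g • v :=
          Fintype.sum_equiv (Equiv.mulLeft h) _ _ (fun g => rfl)
  -- the two commuting involutions
  set g : A5 := ⟨Equiv.swap 0 1 * Equiv.swap 2 3, gmem⟩ with hgdef
  set α : A5 := ⟨Equiv.swap 0 2 * Equiv.swap 1 3, amem⟩ with hadef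
  have hg1 : g ≠ 1 := by
    intro h
    have := congrArg Subtype.val h
    revert this; decide
  have hα1 : α ≠ 1 := by
    intro h
    have := congrArg Subtype.val h
    revert this; decide
  have hαg : α ≠ g := by
    intro h
    have := congrArg Subtype.val h
    revert this; decide
  have hgsq : g * g = 1 := by
    apply Subtype.ext
    show (Equiv.swap (0:Fin 5) 1 * Equiv.swap 2 3) * (Equiv.swap 0 1 * Equiv.swap 2 3) = 1
    decide
  have hord : orderOf g = 2 := by
    refine orderOf_eq_prime ?_ hg1
    rw [sq]; exact hgsq
  have hcomm : α * g = g * α := by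
    apply Subtype.ext
    show (Equiv.swap (0:Fin 5) 2 * Equiv.swap 1 3) * (Equiv.swap 0 1 * Equiv.swap 2 3)
        = (Equiv.swap 0 1 * Equiv.swap 2 3) * (Equiv.swap 0 2 * Equiv.swap 1 3)
    decide
  have hCommute : Commute α g := hcomm
  have hconj : ∀ k : ℤ, α * g ^ k * α⁻¹ = g ^ k := by
    intro k
    rw [(hCommute.zpow_right k).eq, mul_assoc, mul_inv_cancel, mul_one]
  -- α normalizes ⟨g⟩
  have hnorm : α ∈ Subgroup.normalizer (Subgroup.zpowers g : Set A5) := by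
    rw [Subgroup.mem_normalizer_iff]
    intro h
    simp only [SetLike.mem_coe, Subgroup.mem_zpowers_iff]
    constructor
    · rintro ⟨k, rfl⟩
      exact ⟨k, (hconj k).symm⟩
    · rintro ⟨k, hk⟩
      refine ⟨k, ?_⟩
      have h2 : α * g ^ k * α⁻¹ = α * h * α⁻¹ := by rw [hconj k]; exact hk
      have h3 : α * g ^ k = α * h := mul_right_cancel h2
      exact mul_left_cancel h3
  -- α ∉ ⟨g⟩
  have hnot : α ∉ Subgroup.zpowers g := by
    intro hmem
    rw [Subgroup.mem_zpowers_iff] at hmem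
    obtain ⟨k, hk⟩ := hmem
    have hm : g ^ (k % 2) = α := by
      have h := zpow_mod_orderOf g k
      rw [hord] at h
      push_cast at h
      rw [h, hk]
    rcases Int.emod_two_eq k with h0 | h0 <;> rw [h0] at hm
    · exact hα1 (by simpa using hm.symm)
    · exact hαg (by simpa using hm.symm)
  -- V is 2-divisible
  have hdiv : ∀ u : V, ∃ x : V, u = orderOf g • x := by
    intro u
    obtain ⟨x, hx⟩ := h2div.2 u
    exact ⟨x, by rw [hord]; exact hx.symm⟩
  -- trace of fixed point
  have htr : traceMap g w = w + w := by
    rw [traceMap, hord, Finset.sum_range_succ, Finset.sum_range_one, pow_zero, pow_one,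
      one_smul, hfix g]
  have key := hNA g hg1 hdiv α hnorm hnot w
  rw [htr] at key
  have hαw : α • (w + w) = w + w := by rw [smul_add, hfix]
  rw [hαw] at key
  -- w + w = -(w + w)  ⇒  2•(2•w) = 0 ⇒ w = 0
  have h0 : (w + w) + (w + w) = 0 := by
    nth_rewrite 1 [key]
    abel
  have h4 : (2:ℕ) • ((2:ℕ) • w) = (2:ℕ) • (0:V) := by
    simp only [two_smul, smul_zero]
    exact h0
  have h2w : (2:ℕ) • w = 0 := h2div.1 h4
  have hw0 : w = 0 := h2div.1 (by simpa using h2w)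
  exact hw0
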